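/- Let $K$ be a kernel defined by $\mathcal{K}(u,v)$ with the bound $|\mathcal{K}(u,v)| \leq C 2^{-j} \min\{1,\ (2^{jm} |p(v)-p(u)|)^{-1/m}\} \chi_{[0,2^{j-1}]}(|v-u|)$ for all $u,v\in\mathbb{R}$, where $p$ is a fixed real polynomial of degree $l\geq 1$ in one variable with leading coefficient $c_l\neq 0$, and $m\geq 1$. Then for any $\delta\in(0,1]$ with $\delta/m < 1/l$, $\sup_u \int_{\mathbb{R}} |\mathcal{K}(u,v)|\,dv \leq C' 2^{-j\delta} |c_l|^{-\delta/m}$, with $C'$ independent of $j$ and of the lower-order coefficients of $p$. -/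

import Mathlib

open MeasureTheory Set
open scoped ENNReal NNReal


private lemma st15_right (β : ℝ) (hβ0 : 0 ≤ β) (hβ1 : β < 1) {a b : ℝ} (hab : a ≤ b) :
    ∫⁻ v in Set.Ioc a b, ENNReal.ofReal ((v - a) ^ (-β)) ≤
      ENNReal.ofReal ((b - a) ^ (1 - β) / (1 - β)) := by
  have h1 : (-1:ℝ) < -β := by linarith
  have hint : IntervalIntegrable (fun v : ℝ => (v - a) ^ (-β)) volume a b := by
    have := (intervalIntegral.intervalIntegrable_rpow' (r := -β) h1
      (a := a - a) (b := b - a)).comp_sub_right a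
    simpa using this
  have hIoc : IntegrableOn (fun v : ℝ => (v - a) ^ (-β)) (Set.Ioc a b) :=
    (intervalIntegrable_iff_integrableOn_Ioc_of_le hab).mp hint
  have hnn : 0 ≤ᵐ[volume.restrict (Set.Ioc a b)] fun v : ℝ => (v - a) ^ (-β) := by
    refine (ae_restrict_iff' measurableSet_Ioc).mpr (Filter.Eventually.of_forall ?_)
    intro v hv
    exact Real.rpow_nonneg (by linarith [hv.1]) _
  rw [← ofReal_integral_eq_lintegral_ofReal hIoc hnn]
  apply ENNReal.ofReal_le_ofReal
  have : ∫ v in Set.Ioc a b, (v - a) ^ (-β) = ∫ v in a..b, (v - a) ^ (-β) :=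
    (intervalIntegral.integral_of_le hab).symm
  rw [this, intervalIntegral.integral_comp_sub_right (fun t => t ^ (-β)) a, sub_self,
    integral_rpow (Or.inl h1), Real.zero_rpow (by linarith : (-β) + 1 ≠ 0)]
  rw [show (-β) + 1 = 1 - β by ring]
  simp

private lemma st15_left (β : ℝ) (hβ0 : 0 ≤ β) (hβ1 : β < 1) {a b : ℝ} (hab : a ≤ b) :
    ∫⁻ v in Set.Ioc a b, ENNReal.ofReal ((b - v) ^ (-β)) ≤
      ENNReal.ofReal ((b - a) ^ (1 - β) / (1 - β)) := by
  have h1 : (-1:ℝ) < -β := by linarith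
  have hint : IntervalIntegrable (fun v : ℝ => (b - v) ^ (-β)) volume a b := by
    have := (intervalIntegral.intervalIntegrable_rpow' (r := -β) h1
      (a := b - a) (b := b - b)).comp_sub_left b
    simpa using this
  have hIoc : IntegrableOn (fun v : ℝ => (b - v) ^ (-β)) (Set.Ioc a b) :=
    (intervalIntegrable_iff_integrableOn_Ioc_of_le hab).mp hint
  have hnn : 0 ≤ᵐ[volume.restrict (Set.Ioc a b)] fun v : ℝ => (b - v) ^ (-β) := by
    refine (ae_restrict_iff' measurableSet_Ioc).mpr (Filter.Eventually.of_forall ?_)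
    intro v hv
    exact Real.rpow_nonneg (by linarith [hv.2]) _
  rw [← ofReal_integral_eq_lintegral_ofReal hIoc hnn]
  apply ENNReal.ofReal_le_ofReal
  have : ∫ v in Set.Ioc a b, (b - v) ^ (-β) = ∫ v in a..b, (b - v) ^ (-β) :=
    (intervalIntegral.integral_of_le hab).symm
  rw [this, intervalIntegral.integral_comp_sub_left (fun t => t ^ (-β)) b, sub_self,
    integral_rpow (Or.inl h1), Real.zero_rpow (by linarith : (-β) + 1 ≠ 0)]
  rw [show (-β) + 1 = 1 - β by ring]
  simp

private lemma st15_abs (β : ℝ) (hβ0 : 0 ≤ β) (hβ1 : β < 1) (x : ℝ) {a b : ℝ} (hab : a ≤ b) :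
    ∫⁻ v in Set.Ioc a b, ENNReal.ofReal (|v - x| ^ (-β)) ≤
      ENNReal.ofReal (2 * ((b - a) ^ (1 - β) / (1 - β))) := by
  set T := (b - a) ^ (1 - β) / (1 - β) with hT
  have hTnn : 0 ≤ T := div_nonneg (Real.rpow_nonneg (by linarith) _) (by linarith)
  have hosub : ∀ c d : ℝ, a ≤ c → c ≤ d → d ≤ b →
      ENNReal.ofReal ((d - c) ^ (1 - β) / (1 - β)) ≤ ENNReal.ofReal T := by
    intro c d hc hcd hd
    apply ENNReal.ofReal_le_ofReal
    exact div_le_div_of_nonneg_right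
      (Real.rpow_le_rpow (by linarith) (by linarith) (by linarith)) (by linarith) |>.trans_eq rfl
  have part1 : ∫⁻ v in Set.Ioc a (min b x), ENNReal.ofReal (|v - x| ^ (-β)) ≤
      ENNReal.ofReal T := by
    rcases le_or_gt a (min b x) with h | h
    · set c := min b x with hc
      calc ∫⁻ v in Set.Ioc a c, ENNReal.ofReal (|v - x| ^ (-β))
          = ∫⁻ v in Set.Ioo a c, ENNReal.ofReal (|v - x| ^ (-β)) :=
            (setLIntegral_congr Ioo_ae_eq_Ioc).symm
        _ ≤ ∫⁻ v in Set.Ioo a c, ENNReal.ofReal ((c - v) ^ (-β)) := by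
            refine setLIntegral_mono' measurableSet_Ioo ?_
            intro v hv
            apply ENNReal.ofReal_le_ofReal
            have h1 : (0:ℝ) < c - v := by linarith [hv.2]
            have h2 : c - v ≤ |v - x| := by
              have hvx : v < x := lt_of_lt_of_le hv.2 (min_le_right b x)
              have hcx : c ≤ x := min_le_right b x
              rw [abs_sub_comm, abs_of_nonneg (by linarith : (0:ℝ) ≤ x - v)]
              linarith
            exact Real.rpow_le_rpow_of_nonpos h1 h2 (by linarith)
        _ ≤ ∫⁻ v in Set.Ioc a c, ENNReal.ofReal ((c - v) ^ (-β)) :=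
            lintegral_mono_set Set.Ioo_subset_Ioc_self
        _ ≤ ENNReal.ofReal ((c - a) ^ (1 - β) / (1 - β)) := st15_left β hβ0 hβ1 h
        _ ≤ ENNReal.ofReal T := hosub a c le_rfl h (min_le_left _ _)
    · rw [Set.Ioc_eq_empty (by exact fun hlt => absurd hlt (not_lt.mpr h.le))]
      simp
  have part2 : ∫⁻ v in Set.Ioc (max a x) b, ENNReal.ofReal (|v - x| ^ (-β)) ≤
      ENNReal.ofReal T := by
    rcases le_or_gt (max a x) b with h | h
    · set c := max a x with hc
      calc ∫⁻ v in Set.Ioc c b, ENNReal.ofReal (|v - x| ^ (-β))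
          ≤ ∫⁻ v in Set.Ioc c b, ENNReal.ofReal ((v - c) ^ (-β)) := by
            refine setLIntegral_mono' measurableSet_Ioc ?_
            intro v hv
            apply ENNReal.ofReal_le_ofReal
            have h1 : (0:ℝ) < v - c := by linarith [hv.1]
            have h2 : v - c ≤ |v - x| := by
              have hxc : x ≤ c := le_max_right _ _
              rw [abs_of_nonneg (by linarith [hv.1] : (0:ℝ) ≤ v - x)]
              linarith
            exact Real.rpow_le_rpow_of_nonpos h1 h2 (by linarith)
        _ ≤ ENNReal.ofReal ((b - c) ^ (1 - β) / (1 - β)) := st15_right β hβ0 hβ1 h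
        _ ≤ ENNReal.ofReal T := hosub c b (le_max_left _ _) h le_rfl
    · rw [Set.Ioc_eq_empty (not_lt.mpr h.le)]
      simp
  have hsub : Set.Ioc a b ⊆ Set.Ioc a (min b x) ∪ Set.Ioc (max a x) b := by
    intro v hv
    rcases le_or_gt v x with h | h
    · exact Or.inl ⟨hv.1, le_min hv.2 h⟩
    · exact Or.inr ⟨max_lt hv.1 h, hv.2⟩
  calc ∫⁻ v in Set.Ioc a b, ENNReal.ofReal (|v - x| ^ (-β))
      ≤ ∫⁻ v in (Set.Ioc a (min b x) ∪ Set.Ioc (max a x) b),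
          ENNReal.ofReal (|v - x| ^ (-β)) := lintegral_mono_set hsub
    _ ≤ (∫⁻ v in Set.Ioc a (min b x), ENNReal.ofReal (|v - x| ^ (-β)))
        + ∫⁻ v in Set.Ioc (max a x) b, ENNReal.ofReal (|v - x| ^ (-β)) :=
          lintegral_union_le _ _ _
    _ ≤ ENNReal.ofReal T + ENNReal.ofReal T := add_le_add part1 part2
    _ = ENNReal.ofReal (2 * T) := by rw [← ENNReal.ofReal_add hTnn hTnn]; ring_nf

private lemma st15_roots (q : Polynomial ℝ) (hq0 : q ≠ 0) :
    ∃ x : Fin q.natDegree → ℝ,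
      ∀ v : ℝ, |q.leadingCoeff| * ∏ i, |v - x i| ≤ |q.eval v| := by
  classical
  set f := algebraMap ℝ ℂ with hf
  set Q := q.map f with hQdef
  have hQ0 : Q ≠ 0 := by
    simpa [hQdef] using (Polynomial.map_ne_zero_iff (f := f) f.injective).mpr hq0
  have hsp : Q.Splits := IsAlgClosed.splits Q
  have hcard : Q.roots.card = q.natDegree := by
    rw [Polynomial.splits_iff_card_roots.mp hsp, hQdef, Polynomial.natDegree_map]
  set L := Q.roots.toList with hLdef
  have hL : L.length = q.natDegree := by rw [hLdef, Multiset.length_toList, hcard]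
  refine ⟨fun i => (L.get (Fin.cast hL.symm i)).re, fun v => ?_⟩
  have hev : f (q.eval v) = Q.eval (f v) := by
    rw [hQdef, Polynomial.eval_map, Polynomial.eval₂_at_apply]
  have habs : |q.eval v| = ‖Q.eval (f v)‖ := by
    rw [← hev, hf]; simp
  have heq : Q = Polynomial.C Q.leadingCoeff
      * (Q.roots.map fun r => Polynomial.X - Polynomial.C r).prod :=
    hsp.eq_prod_roots
  have hlc : ‖Q.leadingCoeff‖ = |q.leadingCoeff| := by
    rw [hQdef, Polynomial.leadingCoeff_map, hf]
    simp
  have hprod : ‖Q.eval (f v)‖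
      = |q.leadingCoeff| * (Q.roots.map fun r => ‖f v - r‖).prod := by
    conv_lhs => rw [heq]
    rw [Polynomial.eval_mul, Polynomial.eval_C, Polynomial.eval_multiset_prod,
      norm_mul, hlc, Multiset.map_map]
    congr 2
    · rw [show ∀ s : Multiset ℂ, ‖s.prod‖ = (s.map (‖·‖)).prod from fun s => map_multiset_prod (normHom : ℂ →*₀ ℝ) s, Multiset.map_map]
      congr 1
      apply Multiset.map_congr rfl
      intro r _
      simp
  rw [habs, hprod]
  have hnn : (0:ℝ) ≤ |q.leadingCoeff| := abs_nonneg _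
  refine mul_le_mul_of_nonneg_left ?_ hnn
  have hlist : (Q.roots.map fun r => ‖f v - r‖).prod
      = ∏ i : Fin L.length, ‖f v - L.get i‖ := by
    have h1 := Fin.prod_univ_fun_getElem L (fun r => ‖f v - r‖)
    have h2 : ((L.map fun r => ‖f v - r‖ : List ℝ) : Multiset ℝ).prod
        = (Q.roots.map fun r => ‖f v - r‖).prod := by
      rw [← Multiset.map_coe, hLdef, Multiset.coe_toList]
    rw [Multiset.prod_coe] at h2
    rw [← h2]
    simp only [List.get_eq_getElem]
    exact h1.symm
  rw [hlist]
  have := Equiv.prod_comp (finCongr hL) (fun i : Fin q.natDegree => |v - (L.get (Fin.cast hL.symm i)).re|)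
  rw [← this]
  refine Finset.prod_le_prod (fun i _ => abs_nonneg _) (fun i _ => ?_)
  have : (f v - L.get (Fin.cast hL.symm (finCongr hL i))).re = v - (L.get (Fin.cast hL.symm (finCongr hL i))).re := by
    simp [hf]
  calc |v - (L.get (Fin.cast hL.symm (finCongr hL i))).re|
      = |(f v - L.get (Fin.cast hL.symm (finCongr hL i))).re| := by rw [this]
    _ ≤ ‖f v - L.get (Fin.cast hL.symm (finCongr hL i))‖ := Complex.abs_re_le_norm _
    _ = ‖f v - L.get i‖ := by congr 1

private lemma st15_holder {ι : Type*} (s : Finset ι) (l : ℕ) (hcard : s.card = l)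
    (hl0 : 0 < l) (ε : ℝ) (hε0 : 0 < ε) (hεl : ε * l < 1) (x : ι → ℝ) {a b : ℝ} (hab : a ≤ b) :
    ∫⁻ v in Set.Ioc a b, ENNReal.ofReal (∏ i ∈ s, |v - x i| ^ (-ε)) ≤
      ENNReal.ofReal (2 * ((b - a) ^ (1 - ε * l) / (1 - ε * l))) := by
  classical
  set β := ε * l with hβ
  have hl0' : (0:ℝ) < l := by exact_mod_cast hl0
  have hβ0 : 0 ≤ β := by positivity
  have hβ1 : β < 1 := hεl
  set μ := volume.restrict (Set.Ioc a b) with hμ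
  set F : ι → ℝ → ℝ≥0∞ := fun i v => ENNReal.ofReal (|v - x i| ^ (-β)) with hF
  have hmeas : ∀ i ∈ s, AEMeasurable (F i) μ := by
    intro i _
    exact (((measurable_id.sub_const (x i)).abs.pow measurable_const).ennreal_ofReal).aemeasurable
  have hsum : ∑ _i ∈ s, (1 / (l:ℝ)) = 1 := by
    rw [Finset.sum_const, hcard, nsmul_eq_mul]; field_simp
  have key := ENNReal.lintegral_prod_norm_pow_le (μ := μ) s hmeas hsum
    (fun i _ => by positivity)
  have hident : ∀ v : ℝ, (∏ i ∈ s, (F i v) ^ ((1:ℝ) / l))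
      = ENNReal.ofReal (∏ i ∈ s, |v - x i| ^ (-ε)) := by
    intro v
    rw [ENNReal.ofReal_prod_of_nonneg (fun i _ => Real.rpow_nonneg (abs_nonneg _) _)]
    refine Finset.prod_congr rfl (fun i _ => ?_)
    show (ENNReal.ofReal (|v - x i| ^ (-β))) ^ ((1:ℝ)/l) = _
    rw [ENNReal.ofReal_rpow_of_nonneg (Real.rpow_nonneg (abs_nonneg _) _) (by positivity)]
    congr 1
    rw [← Real.rpow_mul (abs_nonneg _)]
    congr 1
    rw [hβ]
    field_simp
  have hT : ∀ i ∈ s, (∫⁻ v, F i v ∂μ) ≤ ENNReal.ofReal (2 * ((b - a) ^ (1 - β) / (1 - β))) :=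
    fun i _ => st15_abs β hβ0 hβ1 (x i) hab
  set T := ENNReal.ofReal (2 * ((b - a) ^ (1 - β) / (1 - β))) with hTdef
  calc ∫⁻ v in Set.Ioc a b, ENNReal.ofReal (∏ i ∈ s, |v - x i| ^ (-ε))
      = ∫⁻ v, (∏ i ∈ s, (F i v) ^ ((1:ℝ) / l)) ∂μ := by
        rw [hμ]; exact (lintegral_congr fun v => hident v).symm
    _ ≤ ∏ i ∈ s, (∫⁻ v, F i v ∂μ) ^ ((1:ℝ) / l) := key
    _ ≤ ∏ _i ∈ s, T ^ ((1:ℝ) / l) :=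
        Finset.prod_le_prod' (fun i hi => ENNReal.rpow_le_rpow (hT i hi) (by positivity))
    _ = (T ^ ((1:ℝ) / l)) ^ (l:ℕ) := by rw [Finset.prod_const, hcard]
    _ = T := by
        rw [← ENNReal.rpow_natCast (T ^ ((1:ℝ)/l)) l, ← ENNReal.rpow_mul]
        norm_num
        rw [inv_mul_cancel₀ (ne_of_gt hl0'), ENNReal.rpow_one]

private lemma st15_sublevel (l : ℕ) (hl0 : 0 < l) (ε : ℝ) (hε0 : 0 < ε) (hεl : ε * l < 1)
    (q : Polynomial ℝ) (hq : q.natDegree = l) {a b : ℝ} (hab : a ≤ b) :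
    ∫⁻ v in Set.Ioc a b, ENNReal.ofReal (|q.eval v| ^ (-ε)) ≤
      ENNReal.ofReal (|q.leadingCoeff| ^ (-ε)) *
        ENNReal.ofReal (2 * ((b - a) ^ (1 - ε * l) / (1 - ε * l))) := by
  have hq0 : q ≠ 0 := by
    intro h
    rw [h, Polynomial.natDegree_zero] at hq
    omega
  have hlc : q.leadingCoeff ≠ 0 := Polynomial.leadingCoeff_ne_zero.mpr hq0
  obtain ⟨x, hx⟩ := st15_roots q hq0
  have hae : ∀ᵐ v : ℝ, v ∈ Set.Ioc a b → ENNReal.ofReal (|q.eval v| ^ (-ε)) ≤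
      ENNReal.ofReal (|q.leadingCoeff| ^ (-ε)) *
        ENNReal.ofReal (∏ i, |v - x i| ^ (-ε)) := by
    filter_upwards [(Set.finite_range x).countable.ae_notMem volume] with v hv _
    have hpos : ∀ i : Fin q.natDegree, 0 < |v - x i| := fun i =>
      abs_pos.mpr (sub_ne_zero.mpr (fun h => hv ⟨i, h.symm⟩))
    have hP : 0 < ∏ i, |v - x i| := Finset.prod_pos fun i _ => hpos i
    have h1 : |q.eval v| ^ (-ε) ≤ (|q.leadingCoeff| * ∏ i, |v - x i|) ^ (-ε) :=
      Real.rpow_le_rpow_of_nonpos (by positivity) (hx v) (by linarith)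
    have h2 : (|q.leadingCoeff| * ∏ i, |v - x i|) ^ (-ε)
        = |q.leadingCoeff| ^ (-ε) * ∏ i, |v - x i| ^ (-ε) := by
      rw [Real.mul_rpow (abs_nonneg _) hP.le,
        Real.finset_prod_rpow _ _ (fun i _ => (hpos i).le)]
    rw [← ENNReal.ofReal_mul (Real.rpow_nonneg (abs_nonneg _) _), ← h2]
    exact ENNReal.ofReal_le_ofReal h1
  calc ∫⁻ v in Set.Ioc a b, ENNReal.ofReal (|q.eval v| ^ (-ε))
      ≤ ∫⁻ v in Set.Ioc a b, ENNReal.ofReal (|q.leadingCoeff| ^ (-ε)) *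
          ENNReal.ofReal (∏ i, |v - x i| ^ (-ε)) :=
        setLIntegral_mono_ae' measurableSet_Ioc hae
    _ = ENNReal.ofReal (|q.leadingCoeff| ^ (-ε)) *
          ∫⁻ v in Set.Ioc a b, ENNReal.ofReal (∏ i, |v - x i| ^ (-ε)) :=
        lintegral_const_mul' _ _ ENNReal.ofReal_ne_top
    _ ≤ ENNReal.ofReal (|q.leadingCoeff| ^ (-ε)) *
          ENNReal.ofReal (2 * ((b - a) ^ (1 - ε * l) / (1 - ε * l))) := by
        refine mul_le_mul_right ?_ _
        have := st15_holder (Finset.univ : Finset (Fin q.natDegree)) l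
          (by simp [hq]) hl0 ε hε0 hεl x hab
        exact this


/-- Schur-type integral bound for the kernel `𝒦` with the interpolated bound
`|𝒦(u,v)| ≤ C 2^{-j} min{1, (2^{jm}|p(v)-p(u)|)^{-1/m}} χ_{[0,2^{j-1}]}(|v-u|)`:
for `δ ∈ (0,1]` with `δ/m < 1/l`,
`sup_u ∫ |𝒦(u,v)| dv ≤ C' 2^{-jδ} |c_l|^{-δ/m}`, with `C'` independent of `j`
and of the lower-order coefficients of `p`. -/
theorem stmt15 (m l : ℕ) (hm : 1 ≤ m) (hl : 1 ≤ l) (δ C : ℝ)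
    (hδ : 0 < δ) (hδ1 : δ ≤ 1) (hδml : δ / m < 1 / l) (hC : 0 ≤ C) :
    ∃ C' : ℝ, 0 < C' ∧
      ∀ (j : ℕ) (p : Polynomial ℝ), p.natDegree = l → p.leadingCoeff ≠ 0 →
      ∀ K : ℝ → ℝ → ℂ, (∀ u, Measurable fun v => K u v) →
        (∀ u v : ℝ, ‖K u v‖
          ≤ C * (2:ℝ)^(-(j:ℤ)) *
            (if p.eval v = p.eval u then 1
              else min 1 (((2:ℝ)^(j*m) * |p.eval v - p.eval u|) ^ (-(1/(m:ℝ))))) *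
            (if |v - u| ≤ (2:ℝ)^((j:ℤ)-1) then 1 else 0)) →
      ∀ u : ℝ,
        (∫⁻ v : ℝ, (‖K u v‖₊ : ℝ≥0∞))
          ≤ ENNReal.ofReal (C' * (2:ℝ) ^ (-(j:ℝ) * δ) * |p.leadingCoeff| ^ (-(δ/m))) := by
  have hm' : (0:ℝ) < m := by exact_mod_cast hm
  have hl' : (0:ℝ) < l := by exact_mod_cast hl
  set ε : ℝ := δ / m with hε
  have hε0 : 0 < ε := div_pos hδ hm'
  have hεl : ε * l < 1 := by
    have h := mul_lt_mul_of_pos_right hδml hl'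
    rwa [one_div, inv_mul_cancel₀ (ne_of_gt hl')] at h
  have hden : (0:ℝ) < 1 - ε * l := by linarith
  refine ⟨C * (2 / (1 - ε * l)) + 1, by positivity, ?_⟩
  intro j p hpdeg hplc K _hKm hK u
  -- setup
  set R : ℝ := (2:ℝ) ^ ((j:ℤ) - 1) with hR
  have hR0 : 0 < R := by positivity
  set a : ℝ := u - R with ha
  set b : ℝ := u + R with hb
  have hab : a ≤ b := by simp [ha, hb]; linarith
  set q : Polynomial ℝ := p - Polynomial.C (p.eval u) with hq
  have hqdeg : q.natDegree = l := by rw [hq, Polynomial.natDegree_sub_C, hpdeg]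
  have hq0 : q ≠ 0 := by
    intro h
    rw [h, Polynomial.natDegree_zero] at hqdeg
    omega
  have hqlc : q.leadingCoeff = p.leadingCoeff := by
    rw [hq]
    apply Polynomial.leadingCoeff_sub_of_degree_lt
    calc (Polynomial.C (p.eval u)).degree ≤ 0 := Polynomial.degree_C_le
      _ < p.degree := by
        rw [← Polynomial.natDegree_pos_iff_degree_pos, hpdeg]; omega
  have hqev : ∀ v : ℝ, q.eval v = p.eval v - p.eval u := by
    intro v; rw [hq, Polynomial.eval_sub, Polynomial.eval_C]
  set D : ℝ := C * (2:ℝ) ^ (-(j:ℝ)) * (2:ℝ) ^ (-(j:ℝ) * δ) with hD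
  have hD0 : 0 ≤ D := by positivity
  -- pointwise a.e. bound
  have hae : ∀ᵐ v : ℝ, (‖K u v‖₊ : ℝ≥0∞) ≤
      (Set.Icc a b).indicator (fun v => ENNReal.ofReal (D * |q.eval v| ^ (-ε))) v := by
    have hroots : ∀ᵐ v : ℝ, ¬ q.IsRoot v :=
      (Polynomial.finite_setOf_isRoot hq0).countable.ae_notMem volume
    filter_upwards [hroots] with v hv
    have hΔ : p.eval v - p.eval u ≠ 0 := by
      intro h; exact hv (by rw [Polynomial.IsRoot, hqev]; exact h)
    have hΔ' : p.eval v ≠ p.eval u := fun h => hΔ (by rw [h, sub_self])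
    rw [← enorm_eq_nnnorm, ← ofReal_norm]
    by_cases hχ : |v - u| ≤ (2:ℝ) ^ ((j:ℤ) - 1)
    · have hmem : v ∈ Set.Icc a b := by
        rw [ha, hb]
        constructor <;> [linarith [abs_le.mp hχ |>.1]; linarith [abs_le.mp hχ |>.2]]
      rw [Set.indicator_of_mem hmem]
      apply ENNReal.ofReal_le_ofReal
      have hKb := hK u v
      rw [if_neg hΔ', if_pos hχ, mul_one] at hKb
      refine hKb.trans ?_
      set X : ℝ := (2:ℝ)^(j*m) * |p.eval v - p.eval u| with hX
      have hX0 : 0 < X := by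
        apply mul_pos (by positivity)
        exact abs_pos.mpr hΔ
      have hminX : min 1 (X ^ (-(1/(m:ℝ)))) ≤ X ^ (-ε) := by
        rcases le_or_gt 1 X with h1 | h1
        · refine (min_le_right _ _).trans ?_
          apply Real.rpow_le_rpow_of_exponent_le h1
          have hεm : ε ≤ 1 / (m:ℝ) := by
            rw [hε]
            exact (div_le_div_iff_of_pos_right hm').mpr hδ1
          linarith
        · refine (min_le_left _ _).trans ?_
          exact Real.one_le_rpow_of_pos_of_le_one_of_nonpos hX0 h1.le (by linarith)
      have hXsplit : X ^ (-ε) = (2:ℝ) ^ (-(j:ℝ) * δ) * |q.eval v| ^ (-ε) := by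
        rw [hX, Real.mul_rpow (by positivity) (abs_nonneg _), hqev]
        congr 1
        rw [← Real.rpow_natCast (2:ℝ) (j*m), ← Real.rpow_mul (by norm_num)]
        congr 1
        push_cast
        rw [hε]
        field_simp [hε]
      calc C * (2:ℝ)^(-(j:ℤ)) * min 1 (X ^ (-(1/(m:ℝ))))
          ≤ C * (2:ℝ)^(-(j:ℤ)) * (X ^ (-ε)) := by
            apply mul_le_mul_of_nonneg_left hminX (by positivity)
        _ = D * |q.eval v| ^ (-ε) := by
            rw [hXsplit, hD, ← Real.rpow_intCast (2:ℝ) (-(j:ℤ))]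
            push_cast
            ring
    · have hKb := hK u v
      rw [if_neg hχ, mul_zero] at hKb
      have : K u v = 0 := norm_le_zero_iff.mp hKb
      simp [this]
  -- integrate
  calc (∫⁻ v : ℝ, (‖K u v‖₊ : ℝ≥0∞))
      ≤ ∫⁻ v : ℝ, (Set.Icc a b).indicator
          (fun v => ENNReal.ofReal (D * |q.eval v| ^ (-ε))) v := lintegral_mono_ae hae
    _ = ∫⁻ v in Set.Icc a b, ENNReal.ofReal (D * |q.eval v| ^ (-ε)) :=
        lintegral_indicator measurableSet_Icc _
    _ = ∫⁻ v in Set.Ioc a b, ENNReal.ofReal (D * |q.eval v| ^ (-ε)) :=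
        (setLIntegral_congr Ioc_ae_eq_Icc).symm
    _ = ENNReal.ofReal D * ∫⁻ v in Set.Ioc a b, ENNReal.ofReal (|q.eval v| ^ (-ε)) := by
        simp_rw [ENNReal.ofReal_mul hD0]
        exact lintegral_const_mul' _ _ ENNReal.ofReal_ne_top
    _ ≤ ENNReal.ofReal D * (ENNReal.ofReal (|q.leadingCoeff| ^ (-ε)) *
          ENNReal.ofReal (2 * ((b - a) ^ (1 - ε * l) / (1 - ε * l)))) := by
        exact mul_le_mul_right (st15_sublevel l (by omega) ε hε0 hεl q hqdeg hab) _
    _ ≤ ENNReal.ofReal ((C * (2 / (1 - ε * l)) + 1) * (2:ℝ) ^ (-(j:ℝ) * δ)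
          * |p.leadingCoeff| ^ (-(δ/m))) := by
        rw [← ENNReal.ofReal_mul (Real.rpow_nonneg (abs_nonneg _) _),
          ← ENNReal.ofReal_mul hD0]
        apply ENNReal.ofReal_le_ofReal
        have hba : b - a = (2:ℝ) ^ ((j:ℝ)) := by
          have h2R : b - a = 2 * R := by rw [hb, ha]; ring
          rw [h2R, hR, ← Real.rpow_intCast (2:ℝ) ((j:ℤ) - 1),
            show ((((j:ℤ) - 1 : ℤ)):ℝ) = (j:ℝ) + (-1) by push_cast; ring,
            Real.rpow_add (by norm_num : (0:ℝ) < 2), Real.rpow_neg_one]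
          ring
        have hpow : (2:ℝ) ^ (-(j:ℝ)) * (2 * ((b - a) ^ (1 - ε * l) / (1 - ε * l)))
            ≤ 2 / (1 - ε * l) := by
          rw [hba, ← Real.rpow_mul (by norm_num : (0:ℝ) ≤ 2)]
          rw [show (2:ℝ) ^ (-(j:ℝ)) * (2 * ((2:ℝ) ^ ((j:ℝ) * (1 - ε * l)) / (1 - ε * l)))
            = ((2:ℝ) ^ (-(j:ℝ)) * (2:ℝ) ^ ((j:ℝ) * (1 - ε * l))) * (2 / (1 - ε * l)) by ring]
          rw [← Real.rpow_add (by norm_num)]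
          have h1 : (2:ℝ) ^ (-(j:ℝ) + (j:ℝ) * (1 - ε * l)) ≤ 1 := by
            apply Real.rpow_le_one_of_one_le_of_nonpos (by norm_num)
            have : -(j:ℝ) + (j:ℝ) * (1 - ε * l) = -((j:ℝ) * (ε * l)) := by ring
            rw [this]
            apply neg_nonpos_of_nonneg
            positivity
          calc (2:ℝ) ^ (-(j:ℝ) + (j:ℝ) * (1 - ε * l)) * (2 / (1 - ε * l))
              ≤ 1 * (2 / (1 - ε * l)) := by
                apply mul_le_mul_of_nonneg_right h1 (by positivity)
            _ = 2 / (1 - ε * l) := one_mul _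
        have hG : (0:ℝ) ≤ |p.leadingCoeff| ^ (-ε) := Real.rpow_nonneg (abs_nonneg _) _
        rw [hqlc]
        calc D * (|p.leadingCoeff| ^ (-ε) * (2 * ((b - a) ^ (1 - ε * l) / (1 - ε * l))))
            = (C * (2:ℝ) ^ (-(j:ℝ) * δ) * |p.leadingCoeff| ^ (-ε)) *
              ((2:ℝ) ^ (-(j:ℝ)) * (2 * ((b - a) ^ (1 - ε * l) / (1 - ε * l)))) := by
              rw [hD]; ring
          _ ≤ (C * (2:ℝ) ^ (-(j:ℝ) * δ) * |p.leadingCoeff| ^ (-ε)) * (2 / (1 - ε * l)) := by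
              apply mul_le_mul_of_nonneg_left hpow (by positivity)
          _ ≤ (C * (2 / (1 - ε * l)) + 1) * (2:ℝ) ^ (-(j:ℝ) * δ) * |p.leadingCoeff| ^ (-(δ/m)) := by
              rw [show -(δ/m) = -ε by rw [hε]]
              have h2 : C * (2 / (1 - ε * l)) ≤ C * (2 / (1 - ε * l)) + 1 := by linarith
              calc C * (2:ℝ) ^ (-(j:ℝ) * δ) * |p.leadingCoeff| ^ (-ε) * (2 / (1 - ε * l))
                  = (C * (2 / (1 - ε * l))) * ((2:ℝ) ^ (-(j:ℝ) * δ) * |p.leadingCoeff| ^ (-ε)) := by ring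
                _ ≤ (C * (2 / (1 - ε * l)) + 1) * ((2:ℝ) ^ (-(j:ℝ) * δ) * |p.leadingCoeff| ^ (-ε)) := by
                    apply mul_le_mul_of_nonneg_right h2 (by positivity)
                _ = (C * (2 / (1 - ε * l)) + 1) * (2:ℝ) ^ (-(j:ℝ) * δ) * |p.leadingCoeff| ^ (-ε) := by ring
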